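/- arXiv:2205.05905 — 3 statements merged into one kernel-verified Lean document; each statement's English description precedes it below -/
import Mathlib

section
/- For every natural number n, ∑_{k=0}^{2n} (-1/2)^k · binom(2k,k) · binom(2n,k) · (3·H_k - 2·H_{2k}) = (1/4)^n · binom(2n,n) · H_n. -/
/-- The `n`-th harmonic number `H_n = 1 + 1/2 + ⋯ + 1/n` (with `H_0 = 0`). -/
noncomputable def H (n : ℕ) : ℝ := ∑ i ∈ Finset.range n, 1 / ((i : ℝ) + 1)

lemma H_succ (n : ℕ) : H (n + 1) = H n + 1 / ((n : ℝ) + 1) :=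
  Finset.sum_range_succ _ _

lemma choose_step (m k : ℕ) :
    ((k : ℝ) + 1) * (m.choose (k + 1) : ℝ) = ((m : ℝ) - k) * (m.choose k : ℝ) := by
  rcases le_or_gt k m with hk | hk
  · have h := Nat.choose_succ_right_eq m k
    have h2 : ((m.choose (k + 1) * (k + 1) : ℕ) : ℝ) = ((m.choose k * (m - k) : ℕ) : ℝ) := by
      exact_mod_cast congrArg (Nat.cast (R := ℝ)) h
    push_cast [Nat.cast_sub hk] at h2
    linarith
  · rw [Nat.choose_eq_zero_of_lt hk, Nat.choose_eq_zero_of_lt (Nat.lt_succ_of_lt hk)]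
    push_cast
    ring

lemma pascal (m k : ℕ) :
    ((m + 1).choose (k + 1) : ℝ) = (m.choose k : ℝ) + (m.choose (k + 1) : ℝ) := by
  exact_mod_cast congrArg (Nat.cast (R := ℝ)) (Nat.choose_succ_succ m k)

lemma central (k : ℕ) :
    ((k : ℝ) + 1) * ((2 * (k + 1)).choose (k + 1) : ℝ)
      = 2 * (2 * (k : ℝ) + 1) * ((2 * k).choose k : ℝ) := by
  have h := Nat.succ_mul_centralBinom_succ k
  unfold Nat.centralBinom at h
  exact_mod_cast h

/-- WZ certificate for the base (Reed–Dawson type) identity. -/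
noncomputable def G0 (n k : ℕ) : ℝ :=
  -(k : ℝ) ^ 2 * (-(1/2) : ℝ) ^ k * ((2 * k).choose k : ℝ) * ((2 * n + 2).choose k : ℝ)

/-- WZ certificate for the harmonic identity. -/
noncomputable def G (n k : ℕ) : ℝ :=
  (-(1/2) : ℝ) ^ k * ((2 * k).choose k : ℝ) *
    ( -(k : ℝ) ^ 2 * ((2 * n + 2).choose k : ℝ) * (3 * H k - 2 * H (2 * k))
      + 2 * (k : ℝ) * ((2 * n + 1).choose k : ℝ) )

lemma key0 (n k : ℕ) :
    4 * ((n : ℝ) + 1) ^ 2 *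
        ((-(1/2) : ℝ) ^ k * ((2 * k).choose k : ℝ) * ((2 * n + 2).choose k : ℝ))
      - 2 * ((n : ℝ) + 1) * (2 * (n : ℝ) + 1) *
        ((-(1/2) : ℝ) ^ k * ((2 * k).choose k : ℝ) * ((2 * n).choose k : ℝ))
    = G0 n (k + 1) - G0 n k := by
  have r1 := choose_step (2 * n) k
  have r2 := choose_step (2 * n + 1) k
  have r3 := choose_step (2 * n + 2) k
  have r4 := pascal (2 * n) k
  have r5 := pascal (2 * n + 1) k
  have r6 := central k
  push_cast at r1 r2 r3 r4 r5 r6 ⊢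
  unfold G0
  push_cast
  linear_combination
    ((-(1/2) : ℝ) ^ k * ((2 * k).choose k : ℝ)) *
      ( (2 * ((n : ℝ) + 1)) * r1
        + (-((k : ℝ) + 1)) * r2
        + (-(2 + (k : ℝ) + 2 * n)) * r3
        + (2 * (1 + (k : ℝ)) * (1 + (n : ℝ))) * r4
        + ((1 + (k : ℝ)) * (2 * (n : ℝ) + 1 - k)) * r5 )
    + ((-(1/2) : ℝ) * (-(1/2) : ℝ) ^ k * ((k : ℝ) + 1) * ((2 * n + 2).choose (k + 1) : ℝ)) * r6

lemma key (n k : ℕ) :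
    4 * ((n : ℝ) + 1) ^ 2 *
        ((-(1/2) : ℝ) ^ k * ((2 * k).choose k : ℝ) * ((2 * n + 2).choose k : ℝ)
          * (3 * H k - 2 * H (2 * k)))
      - 2 * ((n : ℝ) + 1) * (2 * (n : ℝ) + 1) *
        ((-(1/2) : ℝ) ^ k * ((2 * k).choose k : ℝ) * ((2 * n).choose k : ℝ)
          * (3 * H k - 2 * H (2 * k)))
      - 2 * (2 * (n : ℝ) + 1) *
        ((-(1/2) : ℝ) ^ k * ((2 * k).choose k : ℝ) * ((2 * n).choose k : ℝ))
    = G n (k + 1) - G n k := by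
  have r1 := choose_step (2 * n) k
  have r2 := choose_step (2 * n + 1) k
  have r3 := choose_step (2 * n + 2) k
  have r4 := pascal (2 * n) k
  have r5 := pascal (2 * n + 1) k
  have r6 := central k
  have r7 : (2 * (k : ℝ) + 1) * ((k : ℝ) + 1) * (3 * H (k + 1) - 2 * H (2 * (k + 1)))
      = (2 * (k : ℝ) + 1) * ((k : ℝ) + 1) * (3 * H k - 2 * H (2 * k)) + 2 * (k : ℝ) := by
    have e1 : H (k + 1) = H k + 1 / ((k : ℝ) + 1) := H_succ k
    have e2 : H (2 * (k + 1)) = H (2 * k) + 1 / (2 * (k : ℝ) + 1) + 1 / (2 * (k : ℝ) + 2) := by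
      have h2 : 2 * (k + 1) = (2 * k + 1) + 1 := by omega
      rw [h2, H_succ, H_succ]
      push_cast
      ring
    rw [e1, e2]
    have hk1 : ((k : ℝ) + 1) ≠ 0 := by positivity
    have hk2 : (2 * (k : ℝ) + 1) ≠ 0 := by positivity
    have hk3 : (2 * (k : ℝ) + 2) ≠ 0 := by positivity
    field_simp
    ring
  push_cast at r1 r2 r3 r4 r5 r6 ⊢
  unfold G
  push_cast
  linear_combination
    ((-(1/2) : ℝ) ^ k * ((2 * k).choose k : ℝ)) *
      ( (2 * (1 + (3 * H k - 2 * H (2 * k)) * (1 + (n : ℝ)))) * r1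
        + (-(3 * H k - 2 * H (2 * k)) * ((k : ℝ) + 1)) * r2
        + (-(3 * H k - 2 * H (2 * k)) * (2 + (k : ℝ) + 2 * n)) * r3
        + (2 * ((1 + (k : ℝ)) + (3 * H k - 2 * H (2 * k)) * (1 + (k : ℝ)) * (1 + (n : ℝ)))) * r4
        + (-2 * (k : ℝ) + (3 * H k - 2 * H (2 * k)) * (1 + (k : ℝ)) * (2 * (n : ℝ) + 1 - k)) * r5 )
    + ((-(1/2) : ℝ) ^ k / 2 *
        ( -((k : ℝ) + 1) * ((2 * n + 2).choose (k + 1) : ℝ)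
            * (3 * H (k + 1) - 2 * H (2 * (k + 1)))
          + 2 * ((2 * n + 1).choose (k + 1) : ℝ) )) * r6
    + (-((-(1/2) : ℝ) ^ k * ((2 * k).choose k : ℝ) * ((2 * n + 2).choose (k + 1) : ℝ))) * r7

lemma base_id (n : ℕ) :
    ∑ k ∈ Finset.range (2 * n + 1),
      (-(1/2) : ℝ) ^ k * ((2 * k).choose k : ℝ) * ((2 * n).choose k : ℝ)
    = (1/4 : ℝ) ^ n * ((2 * n).choose n : ℝ) := by
  induction n with
  | zero => simp
  | succ n ih =>
    have hG0a : G0 n 0 = 0 := by simp [G0]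
    have hG0b : G0 n (2 * n + 3) = 0 := by
      have hz : (2 * n + 2).choose (2 * n + 3) = 0 := Nat.choose_eq_zero_of_lt (by omega)
      simp [G0, hz]
    have h0 : ∑ k ∈ Finset.range (2 * n + 3),
        (4 * ((n : ℝ) + 1) ^ 2 *
            ((-(1/2) : ℝ) ^ k * ((2 * k).choose k : ℝ) * ((2 * n + 2).choose k : ℝ))
          - 2 * ((n : ℝ) + 1) * (2 * (n : ℝ) + 1) *
            ((-(1/2) : ℝ) ^ k * ((2 * k).choose k : ℝ) * ((2 * n).choose k : ℝ))) = 0 := by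
      rw [Finset.sum_congr rfl (fun k _ => key0 n k), Finset.sum_range_sub]
      rw [hG0a, hG0b]
      ring
    rw [Finset.sum_sub_distrib, ← Finset.mul_sum, ← Finset.mul_sum, sub_eq_zero] at h0
    -- shrink the range of the n-sum
    have hB : ∑ k ∈ Finset.range (2 * n + 3),
        (-(1/2) : ℝ) ^ k * ((2 * k).choose k : ℝ) * ((2 * n).choose k : ℝ)
        = ∑ k ∈ Finset.range (2 * n + 1),
        (-(1/2) : ℝ) ^ k * ((2 * k).choose k : ℝ) * ((2 * n).choose k : ℝ) := by
      have e3 : 2 * n + 3 = (2 * n + 2) + 1 := by omega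
      have e2 : 2 * n + 2 = (2 * n + 1) + 1 := by omega
      have z1 : (2 * n).choose (2 * n + 1) = 0 := Nat.choose_eq_zero_of_lt (by omega)
      have z2 : (2 * n).choose (2 * n + 2) = 0 := Nat.choose_eq_zero_of_lt (by omega)
      rw [e3, Finset.sum_range_succ, e2, Finset.sum_range_succ, z1, z2]
      push_cast
      ring
    rw [hB, ih] at h0
    have hne : (4 * ((n : ℝ) + 1) ^ 2) ≠ 0 := by positivity
    have cc : ((n : ℝ) + 1) * ((2 * (n + 1)).choose (n + 1) : ℝ)
        = 2 * (2 * (n : ℝ) + 1) * ((2 * n).choose n : ℝ) := central n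
    have e4 : 2 * (n + 1) = 2 * n + 2 := by omega
    rw [e4] at cc
    have e5 : 2 * n + 2 + 1 = 2 * n + 3 := by omega
    rw [e4, e5]
    apply mul_left_cancel₀ hne
    linear_combination h0 - ((1/4 : ℝ) ^ n * ((n : ℝ) + 1)) * cc

theorem stmt_2 (n : ℕ) :
    ∑ k ∈ Finset.range (2 * n + 1),
      (-(1/2) : ℝ) ^ k * ((2 * k).choose k : ℝ) * ((2 * n).choose k : ℝ)
        * (3 * H k - 2 * H (2 * k))
    = (1/4 : ℝ) ^ n * ((2 * n).choose n : ℝ) * H n := by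
  induction n with
  | zero => simp [H]
  | succ n ih =>
    have hGa : G n 0 = 0 := by simp [G]
    have hGb : G n (2 * n + 3) = 0 := by
      have hz1 : (2 * n + 2).choose (2 * n + 3) = 0 := Nat.choose_eq_zero_of_lt (by omega)
      have hz2 : (2 * n + 1).choose (2 * n + 3) = 0 := Nat.choose_eq_zero_of_lt (by omega)
      simp [G, hz1, hz2]
    have h0 : ∑ k ∈ Finset.range (2 * n + 3),
        (4 * ((n : ℝ) + 1) ^ 2 *
            ((-(1/2) : ℝ) ^ k * ((2 * k).choose k : ℝ) * ((2 * n + 2).choose k : ℝ)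
              * (3 * H k - 2 * H (2 * k)))
          - 2 * ((n : ℝ) + 1) * (2 * (n : ℝ) + 1) *
            ((-(1/2) : ℝ) ^ k * ((2 * k).choose k : ℝ) * ((2 * n).choose k : ℝ)
              * (3 * H k - 2 * H (2 * k)))
          - 2 * (2 * (n : ℝ) + 1) *
            ((-(1/2) : ℝ) ^ k * ((2 * k).choose k : ℝ) * ((2 * n).choose k : ℝ))) = 0 := by
      rw [Finset.sum_congr rfl (fun k _ => key n k), Finset.sum_range_sub]
      rw [hGa, hGb]
      ring
    rw [Finset.sum_sub_distrib, Finset.sum_sub_distrib, ← Finset.mul_sum, ← Finset.mul_sum,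
      ← Finset.mul_sum] at h0
    have hB : ∑ k ∈ Finset.range (2 * n + 3),
        (-(1/2) : ℝ) ^ k * ((2 * k).choose k : ℝ) * ((2 * n).choose k : ℝ)
          * (3 * H k - 2 * H (2 * k))
        = ∑ k ∈ Finset.range (2 * n + 1),
        (-(1/2) : ℝ) ^ k * ((2 * k).choose k : ℝ) * ((2 * n).choose k : ℝ)
          * (3 * H k - 2 * H (2 * k)) := by
      have e3 : 2 * n + 3 = (2 * n + 2) + 1 := by omega
      have e2 : 2 * n + 2 = (2 * n + 1) + 1 := by omega
      have z1 : (2 * n).choose (2 * n + 1) = 0 := Nat.choose_eq_zero_of_lt (by omega)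
      have z2 : (2 * n).choose (2 * n + 2) = 0 := Nat.choose_eq_zero_of_lt (by omega)
      rw [e3, Finset.sum_range_succ, e2, Finset.sum_range_succ, z1, z2]
      push_cast
      ring
    have hC : ∑ k ∈ Finset.range (2 * n + 3),
        (-(1/2) : ℝ) ^ k * ((2 * k).choose k : ℝ) * ((2 * n).choose k : ℝ)
        = ∑ k ∈ Finset.range (2 * n + 1),
        (-(1/2) : ℝ) ^ k * ((2 * k).choose k : ℝ) * ((2 * n).choose k : ℝ) := by
      have e3 : 2 * n + 3 = (2 * n + 2) + 1 := by omega
      have e2 : 2 * n + 2 = (2 * n + 1) + 1 := by omega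
      have z1 : (2 * n).choose (2 * n + 1) = 0 := Nat.choose_eq_zero_of_lt (by omega)
      have z2 : (2 * n).choose (2 * n + 2) = 0 := Nat.choose_eq_zero_of_lt (by omega)
      rw [e3, Finset.sum_range_succ, e2, Finset.sum_range_succ, z1, z2]
      push_cast
      ring
    rw [hB, hC, ih, base_id n] at h0
    have hne : (4 * ((n : ℝ) + 1) ^ 2) ≠ 0 := by positivity
    have h1 : ((n : ℝ) + 1) ≠ 0 := by positivity
    have hinv : ((n : ℝ) + 1) * ((n : ℝ) + 1)⁻¹ = 1 := mul_inv_cancel₀ h1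
    have cc : ((n : ℝ) + 1) * ((2 * (n + 1)).choose (n + 1) : ℝ)
        = 2 * (2 * (n : ℝ) + 1) * ((2 * n).choose n : ℝ) := central n
    have e4 : 2 * (n + 1) = 2 * n + 2 := by omega
    rw [e4] at cc
    have e5 : 2 * n + 2 + 1 = 2 * n + 3 := by omega
    rw [e4, e5, H_succ]
    apply mul_left_cancel₀ hne
    linear_combination h0
      - ((1/4 : ℝ) ^ n * (((n : ℝ) + 1) * H n + 1)) * cc
      - ((1/4 : ℝ) ^ n * ((n : ℝ) + 1) * ((2 * n + 2).choose (n + 1) : ℝ)) * hinv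
end

section
/- For every natural number n, ∑_{k=0}^{2n} (-2)^k · binom(2n+1,k) · H_k / (k+1) = (4^n - 1)·H_{2n}/(n+1) + H_n/(2(n+1)) + (4^n - 1)/((n+1)(2n+1)). -/
lemma H_zero : H 0 = 0 := by simp [H]

/-- `A n = ∑_{j=0}^{n} (-2)^j C(n,j) H_j`. -/
noncomputable def A (n : ℕ) : ℝ :=
  ∑ j ∈ Finset.range (n + 1), (-2 : ℝ) ^ j * (n.choose j : ℝ) * H j

/-- `Q n = ∑_{k=0}^{n-1} (-2)^k C(n,k+1) H_k`. -/
noncomputable def Q (n : ℕ) : ℝ :=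
  ∑ k ∈ Finset.range n, (-2 : ℝ) ^ k * (n.choose (k + 1) : ℝ) * H k

lemma P_eval (n : ℕ) :
    ∑ j ∈ Finset.range (n + 1), (-2 : ℝ) ^ j * (n.choose j : ℝ) / ((j : ℝ) + 1)
      = (1 - (-1 : ℝ) ^ (n + 1)) / (2 * ((n : ℝ) + 1)) := by
  have key : ((n : ℝ) + 1) *
      ∑ j ∈ Finset.range (n + 1), (-2 : ℝ) ^ j * (n.choose j : ℝ) / ((j : ℝ) + 1)
      = ∑ j ∈ Finset.range (n + 1), (-2 : ℝ) ^ j * ((n + 1).choose (j + 1) : ℝ) := by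
    rw [Finset.mul_sum]
    refine Finset.sum_congr rfl fun j _ => ?_
    have h := Nat.add_one_mul_choose_eq n j
    have h' : ((n : ℝ) + 1) * (n.choose j : ℝ) = ((n + 1).choose (j + 1) : ℝ) * ((j : ℝ) + 1) := by
      exact_mod_cast congrArg (Nat.cast : ℕ → ℝ) h
    have hj : ((j : ℝ) + 1) ≠ 0 := by positivity
    field_simp
    linear_combination h'
  have binom : ((-2 : ℝ) + 1) ^ (n + 1)
      = ∑ m ∈ Finset.range (n + 2), (-2 : ℝ) ^ m * 1 ^ (n + 1 - m) * ((n + 1).choose m : ℝ) := by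
    exact add_pow (-2 : ℝ) 1 (n + 1)
  have binom' : (-1 : ℝ) ^ (n + 1)
      = ∑ m ∈ Finset.range (n + 2), (-2 : ℝ) ^ m * ((n + 1).choose m : ℝ) := by
    rw [show ((-2 : ℝ) + 1) = -1 by norm_num] at binom
    simpa using binom
  have shift : ∑ m ∈ Finset.range (n + 2), (-2 : ℝ) ^ m * ((n + 1).choose m : ℝ)
      = (∑ j ∈ Finset.range (n + 1), (-2 : ℝ) ^ (j + 1) * ((n + 1).choose (j + 1) : ℝ)) + 1 := by
    rw [Finset.sum_range_succ' (fun m => (-2 : ℝ) ^ m * ((n + 1).choose m : ℝ)) (n + 1)]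
    simp
  have key2 : ∑ j ∈ Finset.range (n + 1), (-2 : ℝ) ^ (j + 1) * ((n + 1).choose (j + 1) : ℝ)
      = -2 * ∑ j ∈ Finset.range (n + 1), (-2 : ℝ) ^ j * ((n + 1).choose (j + 1) : ℝ) := by
    rw [Finset.mul_sum]; refine Finset.sum_congr rfl fun j _ => by ring
  have hn : ((n : ℝ) + 1) ≠ 0 := by positivity
  have : ((n : ℝ) + 1) *
      ∑ j ∈ Finset.range (n + 1), (-2 : ℝ) ^ j * (n.choose j : ℝ) / ((j : ℝ) + 1)
      = (1 - (-1 : ℝ) ^ (n + 1)) / 2 := by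
    rw [key]
    have := binom'
    rw [shift, key2] at this
    linarith
  field_simp at this ⊢
  linarith

lemma A_rec (n : ℕ) :
    A (n + 1) = -A n - 2 * ((1 - (-1 : ℝ) ^ (n + 1)) / (2 * ((n : ℝ) + 1))) := by
  have expand : A (n + 1)
      = ∑ j ∈ Finset.range (n + 1),
          (-2 : ℝ) ^ (j + 1) * ((n.choose j : ℝ) + (n.choose (j + 1) : ℝ)) *
            (H j + 1 / ((j : ℝ) + 1)) := by
    rw [A, Finset.sum_range_succ' (fun j => (-2 : ℝ) ^ j * (((n+1).choose j : ℝ)) * H j) (n + 1)]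
    simp only [H_zero, mul_zero, add_zero]
    refine Finset.sum_congr rfl fun j _ => ?_
    rw [Nat.choose_succ_succ, H_succ]
    push_cast
    ring
  have split : A (n + 1)
      = -2 * A n
        - 2 * ∑ j ∈ Finset.range (n + 1), (-2 : ℝ) ^ j * (n.choose j : ℝ) / ((j : ℝ) + 1)
        + ∑ j ∈ Finset.range (n + 1), (-2 : ℝ) ^ (j + 1) * (n.choose (j + 1) : ℝ) * H (j + 1) := by
    rw [expand, A, Finset.mul_sum, Finset.mul_sum, ← Finset.sum_sub_distrib,
      ← Finset.sum_add_distrib]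
    refine Finset.sum_congr rfl fun j _ => ?_
    rw [H_succ]
    field_simp
    ring
  have tail : ∑ j ∈ Finset.range (n + 1), (-2 : ℝ) ^ (j + 1) * (n.choose (j + 1) : ℝ) * H (j + 1)
      = A n := by
    rw [A, Finset.sum_range_succ' (fun j => (-2 : ℝ) ^ j * ((n.choose j : ℝ)) * H j) n]
    rw [Finset.sum_range_succ]
    simp [H_zero, Nat.choose_succ_self]
  rw [split, tail, P_eval]
  ring

lemma A_odd : ∀ m : ℕ, A (2 * m + 1) = H m - 2 * H (2 * m + 1) := by
  intro m
  induction m with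
  | zero =>
      have h0 : A 0 = 0 := by simp [A, H_zero]
      have := A_rec 0
      rw [h0] at this
      simp at this
      rw [show 2 * 0 + 1 = 1 by rfl, this, H_zero, H_succ, H_zero]
      norm_num
  | succ m ih =>
      have heven : A (2 * m + 2) = -A (2 * m + 1) := by
        have := A_rec (2 * m + 1)
        have hpow : ((-1 : ℝ)) ^ (2 * m + 1 + 1) = 1 := by
          rw [show 2 * m + 1 + 1 = 2 * (m + 1) by ring, pow_mul]; norm_num
        rw [hpow] at this
        simpa using this
      have hodd := A_rec (2 * m + 2)
      have hpow : ((-1 : ℝ)) ^ (2 * m + 2 + 1) = -1 := by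
        rw [show 2 * m + 2 + 1 = 2 * (m + 1) + 1 by ring, pow_succ, pow_mul]; norm_num
      rw [hpow, heven, ih] at hodd
      have e1 : 2 * (m + 1) + 1 = 2 * m + 2 + 1 := by ring
      rw [e1, hodd]
      rw [show 2 * m + 2 + 1 = (2 * m + 1) + 1 + 1 by ring, H_succ ((2*m+1)+1), H_succ (2*m+1),
        H_succ m]
      push_cast
      have h1 : ((2:ℝ) * m + 1 + 1) ≠ 0 := by positivity
      have h2 : ((2:ℝ) * m + 1 + 1 + 1) ≠ 0 := by positivity
      have h3 : ((m:ℝ) + 1) ≠ 0 := by positivity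
      field_simp
      ring

lemma A_even (m : ℕ) : A (2 * m + 2) = 2 * H (2 * m + 1) - H m := by
  have := A_rec (2 * m + 1)
  have hpow : ((-1 : ℝ)) ^ (2 * m + 1 + 1) = 1 := by
    rw [show 2 * m + 1 + 1 = 2 * (m + 1) by ring, pow_mul]; norm_num
  rw [hpow, A_odd m] at this
  rw [show 2 * m + 2 = 2 * m + 1 + 1 by rfl, this]
  ring

lemma Q_rec (n : ℕ) : Q (n + 1) = A n + Q n := by
  have expand : Q (n + 1)
      = ∑ k ∈ Finset.range (n + 1),
          ((-2 : ℝ) ^ k * (n.choose k : ℝ) * H k + (-2 : ℝ) ^ k * (n.choose (k + 1) : ℝ) * H k) := by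
    rw [Q]
    refine Finset.sum_congr rfl fun k _ => ?_
    rw [Nat.choose_succ_succ]
    push_cast
    ring
  rw [expand, Finset.sum_add_distrib]
  congr 1
  rw [Q, Finset.sum_range_succ]
  simp [Nat.choose_succ_self]

lemma Q_even : ∀ n : ℕ, Q (2 * n + 2) = H n - 2 * H (2 * n + 1) := by
  intro n
  induction n with
  | zero =>
      have : Q 2 = A 1 + (A 0 + Q 0) := by
        rw [show (2:ℕ) = 1 + 1 by rfl, Q_rec, Q_rec]
      rw [show 2 * 0 + 2 = 2 by rfl, this]
      have h0 : A 0 = 0 := by simp [A, H_zero]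
      have hq0 : Q 0 = 0 := by simp [Q]
      have h1 : A 1 = H 0 - 2 * H 1 := by simpa using A_odd 0
      rw [h0, hq0, h1]
      norm_num
  | succ n ih =>
      have : Q (2 * (n + 1) + 2) = A (2 * n + 3) + (A (2 * n + 2) + Q (2 * n + 2)) := by
        rw [show 2 * (n + 1) + 2 = (2 * n + 3) + 1 by ring, Q_rec,
          show 2 * n + 3 = (2 * n + 2) + 1 by ring, Q_rec]
      rw [this, show 2 * n + 3 = 2 * (n + 1) + 1 by ring, A_odd (n + 1), A_even n, ih]
      ring

/-- An intermediate evaluation established in the proof of the paper's main Corollary. -/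
theorem stmt_5 (n : ℕ) :
    ∑ k ∈ Finset.range (2 * n + 1),
      (-2 : ℝ) ^ k * ((2 * n + 1).choose k : ℝ) * H k / ((k : ℝ) + 1)
    = ((4 : ℝ) ^ n - 1) * H (2 * n) / ((n : ℝ) + 1) + H n / (2 * ((n : ℝ) + 1))
        + ((4 : ℝ) ^ n - 1) / (((n : ℝ) + 1) * (2 * (n : ℝ) + 1)) := by
  have hQ : Q (2 * n + 2)
      = (∑ k ∈ Finset.range (2 * n + 1),
          (-2 : ℝ) ^ k * ((2 * n + 2).choose (k + 1) : ℝ) * H k)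
        + (-2 : ℝ) ^ (2 * n + 1) * H (2 * n + 1) := by
    rw [Q, show 2 * n + 2 = (2 * n + 1) + 1 by rfl, Finset.sum_range_succ]
    simp
  have term : ∀ k ∈ Finset.range (2 * n + 1),
      (-2 : ℝ) ^ k * ((2 * n + 2).choose (k + 1) : ℝ) * H k
      = (2 * (n : ℝ) + 2) * ((-2 : ℝ) ^ k * ((2 * n + 1).choose k : ℝ) * H k / ((k : ℝ) + 1)) := by
    intro k _
    have h := Nat.add_one_mul_choose_eq (2 * n + 1) k
    have h' : (2 * (n : ℝ) + 2) * ((2 * n + 1).choose k : ℝ)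
        = ((2 * n + 2).choose (k + 1) : ℝ) * ((k : ℝ) + 1) := by
      exact_mod_cast congrArg (Nat.cast : ℕ → ℝ) h
    have hk : ((k : ℝ) + 1) ≠ 0 := by positivity
    field_simp
    linear_combination (-H k) * h'
  have hsum : Q (2 * n + 2)
      = (2 * (n : ℝ) + 2) * (∑ k ∈ Finset.range (2 * n + 1),
          (-2 : ℝ) ^ k * ((2 * n + 1).choose k : ℝ) * H k / ((k : ℝ) + 1))
        + (-2 : ℝ) ^ (2 * n + 1) * H (2 * n + 1) := by
    rw [hQ, Finset.mul_sum]
    congr 1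
    exact Finset.sum_congr rfl term
  have hpow : (-2 : ℝ) ^ (2 * n + 1) = -2 * (4 : ℝ) ^ n := by
    rw [pow_succ, pow_mul]; norm_num; ring
  have h21 : H (2 * n + 1) = H (2 * n) + 1 / (2 * (n : ℝ) + 1) := by
    rw [H_succ]; push_cast; ring_nf
  have key := Q_even n
  rw [hsum, hpow, h21] at key
  have hn1 : ((n : ℝ) + 1) ≠ 0 := by positivity
  have hn2 : (2 * (n : ℝ) + 1) ≠ 0 := by positivity
  have hn3 : (2 * (n : ℝ) + 2) ≠ 0 := by positivity
  have lhs_eq : ∑ k ∈ Finset.range (2 * n + 1),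
      (-2 : ℝ) ^ k * ((2 * n + 1).choose k : ℝ) * H k / ((k : ℝ) + 1)
      = (H n - 2 * (H (2 * n) + 1 / (2 * (n : ℝ) + 1))
          - (-2 * (4 : ℝ) ^ n * (H (2 * n) + 1 / (2 * (n : ℝ) + 1)))) / (2 * (n : ℝ) + 2) := by
    field_simp at key ⊢
    linarith
  rw [lhs_eq]
  field_simp
  ring
end

section
/- For every natural number n, ∑_{k=0}^{n} (-1/2)^k · binom(2k,k) · binom(n,k) · (2k+1)(k^2+3k+3)(n-k) / ((k+1)^2 (k+2)(k+3)) equals 1/2 - (n+1)·binom(n, n/2)/(2^n (n+2)) if n is even, and equals 1/2 if n is odd. -/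
/-- The summand. -/
private noncomputable def Fs (n k : ℕ) : ℝ :=
  (-(1/2) : ℝ) ^ k * ((2 * k).choose k : ℝ) * (n.choose k : ℝ)
    * ((2 * (k : ℝ) + 1) * ((k : ℝ) ^ 2 + 3 * k + 3) * ((n : ℝ) - k))
    / (((k : ℝ) + 1) ^ 2 * ((k : ℝ) + 2) * ((k : ℝ) + 3))

/-- The Gosper/Zeilberger certificate. -/
private noncomputable def Gs (n k : ℕ) : ℝ :=
  (-(1/2) : ℝ) ^ k * ((2 * k).choose k : ℝ) * ((n + 2).choose k : ℝ)
    * ((2*(n:ℝ)+6)*(k:ℝ)^6 + (-2*(n:ℝ)^2+(n:ℝ)+21)*(k:ℝ)^5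
      + (-11*(n:ℝ)^2-34*(n:ℝ)-7)*(k:ℝ)^4 + (-21*(n:ℝ)^2-79*(n:ℝ)-70)*(k:ℝ)^3
      + (-22*(n:ℝ)^2-79*(n:ℝ)-77)*(k:ℝ)^2 + (-13*(n:ℝ)^2-42*(n:ℝ)-35)*(k:ℝ)
      - 3*((n:ℝ)+1)*((n:ℝ)+2))
    / (((n:ℝ)+1) * ((n:ℝ)+2) * ((k:ℝ)+1)^2 * ((k:ℝ)+2) * ((k:ℝ)+3))

/-- The right-hand side. -/
private noncomputable def Rs (n : ℕ) : ℝ :=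
  if Even n then
    1 / 2 - (n.choose (n / 2) : ℝ) * ((n : ℝ) + 1) / (2 ^ n * ((n : ℝ) + 2))
  else 1 / 2

private lemma key_s14 (n k : ℕ) (hk : k ≤ n + 2) :
    Gs n (k+1) - Gs n k = ((n:ℝ)+4) * Fs (n+2) k - ((n:ℝ)+3) * Fs n k := by
  have hx1 : ((k:ℝ)+1) ≠ 0 := by positivity
  have hx2 : ((k:ℝ)+2) ≠ 0 := by positivity
  have hx3 : ((k:ℝ)+3) ≠ 0 := by positivity
  have hx4 : ((k:ℝ)+4) ≠ 0 := by positivity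
  have hy1 : ((n:ℝ)+1) ≠ 0 := by positivity
  have hy2 : ((n:ℝ)+2) ≠ 0 := by positivity
  -- central binomial step
  have h1 : (((2*(k+1)).choose (k+1) : ℕ) : ℝ)
      = ((2*k).choose k : ℝ) * (2*(k:ℝ)+1) * (2*(k:ℝ)+2) / ((k:ℝ)+1)^2 := by
    have hc := Nat.succ_mul_centralBinom_succ k
    simp only [Nat.centralBinom] at hc
    have hc' : (((k:ℝ))+1) * (((2*(k+1)).choose (k+1) : ℕ) : ℝ)
        = 2*(2*(k:ℝ)+1) * ((2*k).choose k : ℝ) := by exact_mod_cast congrArg (Nat.cast (R := ℝ)) hc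
    field_simp
    nlinarith [hc']
  -- Pascal-type step for C(n+2, k+1)
  have h2 : (((n+2).choose (k+1) : ℕ) : ℝ)
      = ((n:ℝ)+2-(k:ℝ)) * ((n+2).choose k : ℝ) / ((k:ℝ)+1) := by
    have hc := Nat.choose_succ_right_eq (n+2) k
    have hsub : ((n + 2 - k : ℕ) : ℝ) = (n:ℝ)+2-(k:ℝ) := by
      rw [Nat.cast_sub hk]; push_cast; ring
    have hc' : (((n+2).choose (k+1) : ℕ) : ℝ) * ((k:ℝ)+1)
        = ((n+2).choose k : ℝ) * ((n:ℝ)+2-(k:ℝ)) := by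
      rw [← hsub]; exact_mod_cast congrArg (Nat.cast (R := ℝ)) hc
    field_simp
    linarith [hc']
  -- relate C(n,k) to C(n+2,k)
  have h3 : ((n.choose k : ℕ) : ℝ)
      = ((n:ℝ)+2-(k:ℝ)) * ((n:ℝ)+1-(k:ℝ)) * ((n+2).choose k : ℝ)
        / (((n:ℝ)+1) * ((n:ℝ)+2)) := by
    rcases Nat.lt_or_ge k (n+2) with hlt | hge
    · have hk1 : k ≤ n + 1 := by omega
      have ha := Nat.choose_mul_succ_eq n k
      have hb := Nat.choose_mul_succ_eq (n+1) k
      have hsa : ((n + 1 - k : ℕ) : ℝ) = (n:ℝ)+1-(k:ℝ) := by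
        rw [Nat.cast_sub hk1]; push_cast; ring
      have hsb : ((n + 1 + 1 - k : ℕ) : ℝ) = (n:ℝ)+2-(k:ℝ) := by
        rw [Nat.cast_sub (by omega : k ≤ n + 1 + 1)]; push_cast; ring
      have ha' : ((n.choose k : ℕ) : ℝ) * ((n:ℝ)+1)
          = ((n+1).choose k : ℝ) * ((n:ℝ)+1-(k:ℝ)) := by
        rw [← hsa]; exact_mod_cast congrArg (Nat.cast (R := ℝ)) ha
      have hb' : (((n+1).choose k : ℕ) : ℝ) * ((n:ℝ)+2)
          = ((n+2).choose k : ℝ) * ((n:ℝ)+2-(k:ℝ)) := by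
        have : ((n+1+1).choose k : ℝ) = ((n+2).choose k : ℝ) := by norm_num
        rw [← hsb, ← this]
        have := congrArg (Nat.cast (R := ℝ)) hb
        push_cast at this ⊢
        linarith [this]
      field_simp
      nlinarith [ha', hb']
    · have hkeq : k = n + 2 := le_antisymm hk hge
      subst hkeq
      have hz : n.choose (n+2) = 0 := Nat.choose_eq_zero_of_lt (by omega)
      rw [hz]
      push_cast
      field_simp
      ring
  simp only [Gs, Fs]
  rw [h1, h2, h3]
  have hcast1 : (((k:ℕ)+1 : ℕ) : ℝ) = (k:ℝ)+1 := by push_cast; ring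
  have hcast2 : (((n:ℕ)+2 : ℕ) : ℝ) = (n:ℝ)+2 := by push_cast; ring
  rw [pow_succ]
  push_cast
  field_simp
  ring

private lemma recur (n : ℕ) :
    ((n:ℝ)+4) * (∑ k ∈ Finset.range (n+2+1), Fs (n+2) k)
      - ((n:ℝ)+3) * (∑ k ∈ Finset.range (n+1), Fs n k) = 1/2 := by
  have htel : ∑ k ∈ Finset.range (n+3), (Gs n (k+1) - Gs n k) = Gs n (n+3) - Gs n 0 :=
    Finset.sum_range_sub (Gs n) (n+3)
  have hcongr : ∑ k ∈ Finset.range (n+3), (Gs n (k+1) - Gs n k)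
      = ∑ k ∈ Finset.range (n+3), (((n:ℝ)+4) * Fs (n+2) k - ((n:ℝ)+3) * Fs n k) := by
    refine Finset.sum_congr rfl fun k hk => ?_
    exact key_s14 n k (by have := Finset.mem_range.mp hk; omega)
  have hGtop : Gs n (n+3) = 0 := by
    have : (n+2).choose (n+3) = 0 := Nat.choose_eq_zero_of_lt (by omega)
    simp [Gs, this]
  have hG0 : Gs n 0 = -(1/2) := by
    have hy1 : ((n:ℝ)+1) ≠ 0 := by positivity
    have hy2 : ((n:ℝ)+2) ≠ 0 := by positivity
    simp only [Gs]
    norm_num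
    field_simp
  have hzero1 : Fs n (n+1) = 0 := by
    have : n.choose (n+1) = 0 := Nat.choose_eq_zero_of_lt (by omega)
    simp [Fs, this]
  have hzero2 : Fs n (n+2) = 0 := by
    have : n.choose (n+2) = 0 := Nat.choose_eq_zero_of_lt (by omega)
    simp [Fs, this]
  have hsum : ∑ k ∈ Finset.range (n+3), Fs n k = ∑ k ∈ Finset.range (n+1), Fs n k := by
    rw [show n+3 = (n+2)+1 by ring, Finset.sum_range_succ,
      show n+2 = (n+1)+1 by ring, Finset.sum_range_succ, hzero1, hzero2]
    ring
  have hsplit : ∑ k ∈ Finset.range (n+3), (((n:ℝ)+4) * Fs (n+2) k - ((n:ℝ)+3) * Fs n k)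
      = ((n:ℝ)+4) * (∑ k ∈ Finset.range (n+3), Fs (n+2) k)
        - ((n:ℝ)+3) * (∑ k ∈ Finset.range (n+3), Fs n k) := by
    rw [Finset.sum_sub_distrib, Finset.mul_sum, Finset.mul_sum]
  have : ((n:ℝ)+4) * (∑ k ∈ Finset.range (n+3), Fs (n+2) k)
      - ((n:ℝ)+3) * (∑ k ∈ Finset.range (n+1), Fs n k) = 1/2 := by
    rw [← hsum, ← hsplit, ← hcongr, htel, hGtop, hG0]; ring
  calc ((n:ℝ)+4) * (∑ k ∈ Finset.range (n+2+1), Fs (n+2) k)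
      - ((n:ℝ)+3) * (∑ k ∈ Finset.range (n+1), Fs n k)
      = ((n:ℝ)+4) * (∑ k ∈ Finset.range (n+3), Fs (n+2) k)
        - ((n:ℝ)+3) * (∑ k ∈ Finset.range (n+1), Fs n k) := by norm_num
    _ = 1/2 := this

private lemma rhs_recur (n : ℕ) : ((n:ℝ)+4) * Rs (n+2) - ((n:ℝ)+3) * Rs n = 1/2 := by
  rcases Nat.even_or_odd n with he | ho
  · obtain ⟨m, rfl⟩ := he
    have hev : Even (m + m) := ⟨m, rfl⟩
    have hev2 : Even (m + m + 2) := by exact ⟨m+1, by ring⟩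
    have hdiv : (m + m) / 2 = m := by omega
    have hdiv2 : (m + m + 2) / 2 = m + 1 := by omega
    simp only [Rs, if_pos hev, if_pos hev2, hdiv, hdiv2]
    -- central binomial identity
    have hc := Nat.succ_mul_centralBinom_succ m
    simp only [Nat.centralBinom] at hc
    have e1 : 2*(m+1) = m+m+2 := by ring
    have e2 : 2*m = m+m := by ring
    rw [e1, e2] at hc
    have hc' : ((m:ℝ)+1) * ((m+m+2).choose (m+1) : ℝ)
        = 2*((m:ℝ)+(m:ℝ)+1) * ((m+m).choose m : ℝ) := by
      exact_mod_cast congrArg (Nat.cast (R := ℝ)) hc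
    have hpow : (2:ℝ)^(m+m+2) = 4 * 2^(m+m) := by rw [pow_add]; ring
    have hp : (2:ℝ)^(m+m) ≠ 0 := by positivity
    have hy2 : ((m:ℝ)+(m:ℝ)+2) ≠ 0 := by positivity
    have hy4 : ((m:ℝ)+(m:ℝ)+4) ≠ 0 := by positivity
    have hm1 : ((m:ℝ)+1) ≠ 0 := by positivity
    have e3 : (((m+m+2).choose (m+1) : ℕ) : ℝ)
        = 2*((m:ℝ)+(m:ℝ)+1) * ((m+m).choose m : ℝ) / ((m:ℝ)+1) := by
      field_simp
      linarith [hc']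
    rw [hpow, e3]
    push_cast
    field_simp
    ring
  · have hne : ¬ Even n := Nat.not_even_iff_odd.mpr ho
    have hne2 : ¬ Even (n+2) := by
      intro h
      rcases h with ⟨r, hr⟩
      exact hne ⟨r-1, by omega⟩
    simp only [Rs, if_neg hne, if_neg hne2]
    ring

private lemma main : ∀ n : ℕ, ∑ k ∈ Finset.range (n+1), Fs n k = Rs n := by
  intro n
  induction n using Nat.twoStepInduction with
  | zero =>
    simp only [Rs]
    norm_num [Finset.sum_range_succ, Fs]
  | one =>
    have h1 : ¬ Even 1 := by decide
    simp only [Rs, if_neg h1]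
    norm_num [Finset.sum_range_succ, Fs]
  | more n ih _ =>
    have h := recur n
    rw [ih] at h
    have h2 := rhs_recur n
    have hy4 : ((n:ℝ)+4) ≠ 0 := by positivity
    have : ((n:ℝ)+4) * (∑ k ∈ Finset.range (n+2+1), Fs (n+2) k)
        = ((n:ℝ)+4) * Rs (n+2) := by linarith
    exact mul_left_cancel₀ hy4 this

/-- An identity derived in Section 5 of the paper by applying the modified Abel
lemma on summation by parts. -/
theorem stmt_14 (n : ℕ) :
    ∑ k ∈ Finset.range (n + 1),
      (-(1/2) : ℝ) ^ k * ((2 * k).choose k : ℝ) * (n.choose k : ℝ)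
        * ((2 * (k : ℝ) + 1) * ((k : ℝ) ^ 2 + 3 * k + 3) * ((n : ℝ) - k))
        / (((k : ℝ) + 1) ^ 2 * ((k : ℝ) + 2) * ((k : ℝ) + 3))
    = if Even n then
        1 / 2 - (n.choose (n / 2) : ℝ) * ((n : ℝ) + 1) / (2 ^ n * ((n : ℝ) + 2))
      else 1 / 2 := by
  have := main n
  simp only [Fs, Rs] at this
  exact this
end
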